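/- For every integer j ≥ 2 and every x ∈ [0,1], the double series Σ_{n=1}^∞ Σ_{k=1}^∞ (n+1)^{j−1}/((n+1)(k + x) + 1)^{j+1} converges and satisfies Σ_{n=1}^∞ Σ_{k=1}^∞ (n+1)^{j−1}/((n+1)(k + x) + 1)^{j+1} ≤ π⁴/36. -/

import Mathlib

open Real

private lemma hasSum_shift1 :
    HasSum (fun n : ℕ => 1 / ((n : ℝ) + 1) ^ 2) (π ^ 2 / 6) := by
  have h := (hasSum_nat_add_iff' (f := fun n : ℕ => (1 : ℝ) / (n : ℝ) ^ 2) 1).mpr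
    hasSum_zeta_two
  simpa using h

private lemma hasSum_shift2 :
    HasSum (fun n : ℕ => 1 / ((n : ℝ) + 2) ^ 2) (π ^ 2 / 6 - 1) := by
  have h := (hasSum_nat_add_iff' (f := fun n : ℕ => (1 : ℝ) / (n : ℝ) ^ 2) 2).mpr
    hasSum_zeta_two
  have : ∑ i ∈ Finset.range 2, (1 : ℝ) / (i : ℝ) ^ 2 = 1 := by
    simp [Finset.sum_range_succ]
  rw [this] at h
  convert h using 2 with n
  · rfl
  push_cast; ring_nf

/-- **Uniform bound on the `j`-th derivative sums for the Rényi branches**: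
for every integer `j ≥ 2` and `x ∈ [0,1]`,
`Σ_{n,k ≥ 1} (n+1)^{j-1}/((n+1)(k+x)+1)^{j+1}` converges and is at most `π⁴/36`. -/
theorem stmt9 (j : ℕ) (hj : 2 ≤ j) (x : ℝ) (hx : x ∈ Set.Icc (0 : ℝ) 1) :
    Summable (fun p : ℕ × ℕ =>
      (((p.1 : ℝ) + 1) + 1) ^ (j - 1) /
        ((((p.1 : ℝ) + 1) + 1) * (((p.2 : ℝ) + 1) + x) + 1) ^ (j + 1)) ∧
    (∑' p : ℕ × ℕ, (((p.1 : ℝ) + 1) + 1) ^ (j - 1) /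
        ((((p.1 : ℝ) + 1) + 1) * (((p.2 : ℝ) + 1) + x) + 1) ^ (j + 1)) ≤ π ^ 4 / 36 := by
  obtain ⟨m, rfl⟩ : ∃ m, j = m + 2 := ⟨j - 2, by omega⟩
  obtain ⟨hx0, hx1⟩ := hx
  set g : ℕ → ℝ := fun n => 1 / ((n : ℝ) + 2) ^ 2 with hgdef
  set h : ℕ → ℝ := fun k => 1 / ((k : ℝ) + 1) ^ 2 with hhdef
  have hg := hasSum_shift2
  have hh := hasSum_shift1
  set F : ℕ × ℕ → ℝ := fun p =>
      (((p.1 : ℝ) + 1) + 1) ^ (m + 2 - 1) /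
        ((((p.1 : ℝ) + 1) + 1) * (((p.2 : ℝ) + 1) + x) + 1) ^ (m + 2 + 1) with hFdef
  have hFnonneg : ∀ p : ℕ × ℕ, 0 ≤ F p := by
    intro p
    apply div_nonneg (by positivity) (by positivity)
  have key : ∀ p : ℕ × ℕ, F p ≤ g p.1 * h p.2 := by
    intro ⟨n, k⟩
    set a : ℝ := (n : ℝ) + 1 + 1 with ha
    set c : ℝ := (k : ℝ) + 1 with hc
    have ha2 : (2 : ℝ) ≤ a := by have := Nat.cast_nonneg (α := ℝ) n; simp only [ha]; linarith
    have hc1 : (1 : ℝ) ≤ c := by have := Nat.cast_nonneg (α := ℝ) k; simp only [hc]; linarith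
    have ha0 : (0 : ℝ) < a := by linarith
    have hc0 : (0 : ℝ) < c := by linarith
    have hd : a * c ≤ a * (((k : ℝ) + 1) + x) + 1 := by
      nlinarith
    have hd0 : (0 : ℝ) < a * c := by positivity
    have step1 : F (n, k) ≤ a ^ (m + 1) / (a * c) ^ (m + 3) := by
      show a ^ (m + 2 - 1) / (a * (((k : ℝ) + 1) + x) + 1) ^ (m + 2 + 1) ≤ _
      have : m + 2 - 1 = m + 1 := by omega
      rw [this]
      apply div_le_div_of_nonneg_left (by positivity) (by positivity)
      exact pow_le_pow_left₀ hd0.le hd _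
    have step2 : a ^ (m + 1) / (a * c) ^ (m + 3) = 1 / (a ^ 2 * c ^ (m + 3)) := by
      rw [mul_pow]
      rw [show m + 3 = (m + 1) + 2 by ring, pow_add a]
      field_simp
      ring
    have step3 : (1 : ℝ) / (a ^ 2 * c ^ (m + 3)) ≤ 1 / (a ^ 2 * c ^ 2) := by
      apply div_le_div_of_nonneg_left one_pos.le (by positivity)
      have : c ^ 2 ≤ c ^ (m + 3) := pow_le_pow_right₀ hc1 (by omega)
      nlinarith [sq_nonneg a, pow_pos hc0 (m+3), pow_pos ha0 2]
    have step4 : (1 : ℝ) / (a ^ 2 * c ^ 2) = g n * h k := by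
      simp only [hgdef, hhdef, ha, hc]
      rw [one_div_mul_eq_div, div_div]
      norm_num
      ring
    calc F (n, k) ≤ a ^ (m + 1) / (a * c) ^ (m + 3) := step1
      _ = 1 / (a ^ 2 * c ^ (m + 3)) := step2
      _ ≤ 1 / (a ^ 2 * c ^ 2) := step3
      _ = g n * h k := step4
  have hGH : Summable (fun p : ℕ × ℕ => g p.1 * h p.2) :=
    hg.summable.mul_of_nonneg hh.summable (fun n => by positivity) (fun k => by positivity)
  have hF : Summable F := Summable.of_nonneg_of_le hFnonneg key hGH
  refine ⟨hF, ?_⟩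
  have hmul : HasSum (fun p : ℕ × ℕ => g p.1 * h p.2) ((π ^ 2 / 6 - 1) * (π ^ 2 / 6)) :=
    hg.mul hh hGH
  calc (∑' p, F p) ≤ ∑' p : ℕ × ℕ, g p.1 * h p.2 := Summable.tsum_le_tsum key hF hGH
    _ = (π ^ 2 / 6 - 1) * (π ^ 2 / 6) := hmul.tsum_eq
    _ ≤ π ^ 4 / 36 := by nlinarith [pi_pos]
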